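/- The power sum p_Λ is upper triangular in the monomial basis with respect to the weight ordering: p_Λ = a_Λ m_Λ + Σ_{Γ > Λ} a_{Λ,Γ} m_Γ, where a_Λ = Π (over maximal runs of equal parts) n_Λ(Λᵢ)! , the product of factorials of the multiplicities of the distinct parts of Λ. -/

import Mathlib

noncomputable section

/-- A part of an `N=2` superpartition: plain, overlined, underlined or bilined. -/
inductive SPart where
  | plain (a : ℕ)
  | bar (a : ℕ)
  | und (a : ℕ)
  | bil (a : ℕ)
deriving DecidableEq

namespace SPart

/-- The numerical value of a part. -/
def value : SPart → ℕ
  | .plain a => a | .bar a => a | .und a => a | .bil a => a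

/-- The rank used to order parts of equal value: bilined ≻ overlined ≻ underlined ≻ plain. -/
def rank : SPart → ℕ
  | .plain _ => 0 | .und _ => 1 | .bar _ => 2 | .bil _ => 3

/-- The weight of a part: `w(a) = a`, `w(ā) = w(a̲) = a + 1/2`, `w(a̿) = a + 1`. -/
def weight : SPart → ℚ
  | .plain a => a
  | .bar a => a + 1/2
  | .und a => a + 1/2
  | .bil a => a + 1

end SPart

/-- A list of parts is a genuine `N=2` superpartition when it is sorted (decreasing values,
ties broken as bilined ≻ overlined ≻ underlined ≻ plain), its overlined parts are distinct,
its underlined parts are distinct, and it contains no plain zero part. -/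
def IsSPar (L : List SPart) : Prop :=
  L.Pairwise (fun p q => q.value < p.value ∨ (p.value = q.value ∧ q.rank ≤ p.rank)) ∧
    (∀ a, L.count (SPart.bar a) ≤ 1) ∧ (∀ a, L.count (SPart.und a) ≤ 1) ∧
    SPart.plain 0 ∉ L

/-- Partial sums of weights, and the weight ordering on superpartitions. -/
def wPartial (L : List SPart) (n : ℕ) : ℚ := ((L.take n).map SPart.weight).sum

def wLt (Λ Γ : List SPart) : Prop :=
  (∀ n, wPartial Λ n ≤ wPartial Γ n) ∧ ∃ n, wPartial Λ n < wPartial Γ n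

/-- The coefficient ring: exterior algebra on the two odd families `φᵢ, θᵢ`. -/
abbrev OddAlg (N : ℕ) : Type := ExteriorAlgebra ℚ ((Bool × Fin N) → ℚ)

def φGen (N : ℕ) (i : Fin N) : OddAlg N := ExteriorAlgebra.ι ℚ (Pi.single (false, i) (1 : ℚ))
def θGen (N : ℕ) (i : Fin N) : OddAlg N := ExteriorAlgebra.ι ℚ (Pi.single (true, i) (1 : ℚ))

/-- The ring of `N=2` superpolynomial-valued series in `N` commuting variables. -/
abbrev SRing (N : ℕ) : Type := MvPowerSeries (Fin N) (OddAlg N)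

def cst (N : ℕ) : OddAlg N →+* SRing N := MvPowerSeries.C

/-- The factor `φᵢ^{ε̄} θᵢ^{ε̲} xᵢ^{|Λₖ|}` contributed by a part assigned to variable `i`. -/
def factor (N : ℕ) : SPart → Fin N → SRing N
  | .plain a, i => MvPowerSeries.X i ^ a
  | .bar a, i => cst N (φGen N i) * MvPowerSeries.X i ^ a
  | .und a, i => cst N (θGen N i) * MvPowerSeries.X i ^ a
  | .bil a, i => cst N (φGen N i * θGen N i) * MvPowerSeries.X i ^ a

/-- The multiplicity factor `a_Λ = Π n_Λ(Λᵢ)!` (product of factorials of the multiplicities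
of the distinct parts). -/
def aFac (L : List SPart) : ℕ := ∏ p ∈ L.toFinset, Nat.factorial (L.count p)

/-- The monomial symmetric superfunction `m_Λ`: the sum over all distinct permutations of
`[φ;θ]_Λ x^Λ`, realized as `a_Λ⁻¹` times the sum over all injective assignments of variables
to the parts of `Λ`. -/
def mono (N : ℕ) (L : List SPart) : SRing N :=
  ((aFac L : ℚ))⁻¹ •
    ∑ f : Fin L.length ↪ Fin N,
      ((List.finRange L.length).map (fun i => factor N (L.get i) (f i))).prod

/-- The one-part power-sum generators `pₙ = m₍ₙ₎`, `p̄ₙ = m₍ₙ̄₎`, `p̲ₙ = m₍ₙ̲₎`,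
`p̿ₙ = m₍ₙ̿₎`. -/
def pGen (N : ℕ) (p : SPart) : SRing N := ∑ i : Fin N, factor N p i

/-- The multiplicative power sum `p_Λ` (ordered product over the parts of `Λ`). -/
def pProd (N : ℕ) (L : List SPart) : SRing N := (L.map (pGen N)).prod


-- ===================== Auxiliary development =====================
namespace UT
open SPart ExteriorAlgebra

/-- The sorting order used on parts. -/
def rOrd (p q : SPart) : Prop := q.value < p.value ∨ (p.value = q.value ∧ q.rank ≤ p.rank)

instance : DecidableRel rOrd := fun p q => by unfold rOrd; infer_instance

instance : IsTotal SPart rOrd := ⟨by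
  intro a b
  rcases lt_trichotomy a.value b.value with h | h | h
  · exact Or.inr (Or.inl h)
  · rcases le_total b.rank a.rank with h2 | h2
    · exact Or.inl (Or.inr ⟨h, h2⟩)
    · exact Or.inr (Or.inr ⟨h.symm, h2⟩)
  · exact Or.inl (Or.inl h)⟩

instance : IsTrans SPart rOrd := ⟨by
  intro a b c hab hbc; unfold rOrd at *; omega⟩

lemma rOrd_eq {p q : SPart} (h1 : rOrd p q) (h2 : rOrd q p) : p = q := by
  have hv : p.value = q.value ∧ p.rank = q.rank := by unfold rOrd at *; omega
  obtain ⟨hv, hr⟩ := hv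
  cases p <;> cases q <;> simp_all [SPart.value, SPart.rank]

instance : IsAntisymm SPart rOrd := ⟨fun _ _ h1 h2 => rOrd_eq h1 h2⟩

/-- Parity of a part. -/
def SPart.odd : SPart → Bool
  | .bar _ => true | .und _ => true | _ => false

def commSgn (p q : SPart) : ℤ := if SPart.odd p && SPart.odd q then -1 else 1

lemma commSgn_mul_self (p q : SPart) : commSgn p q * commSgn p q = 1 := by
  unfold commSgn; split <;> norm_num

def merge : SPart → SPart → SPart
  | .plain a, .plain b => .plain (a+b)
  | .plain a, .bar b => .bar (a+b)
  | .plain a, .und b => .und (a+b)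
  | .plain a, .bil b => .bil (a+b)
  | .bar a, .plain b => .bar (a+b)
  | .bar a, .und b => .bil (a+b)
  | .und a, .plain b => .und (a+b)
  | .und a, .bar b => .bil (a+b)
  | .bil a, .plain b => .bil (a+b)
  | _, _ => .plain 0

def mcoef : SPart → SPart → ℤ
  | .plain _, _ => 1
  | .bar _, .plain _ => 1
  | .bar _, .und _ => 1
  | .und _, .plain _ => 1
  | .und _, .bar _ => -1
  | .bil _, .plain _ => 1
  | _, _ => 0

variable {N : ℕ}

lemma iota_swap (v w : (Bool × Fin N) → ℚ) :
    ι ℚ v * ι ℚ w = -(ι ℚ w * ι ℚ v) := by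
  have h := ExteriorAlgebra.ι_add_mul_swap (R := ℚ) v w
  rw [eq_neg_iff_add_eq_zero, h]

lemma iota_pair_comm (v a b : (Bool × Fin N) → ℚ) :
    ι ℚ v * (ι ℚ a * ι ℚ b) = (ι ℚ a * ι ℚ b) * ι ℚ v := by
  rw [← mul_assoc, iota_swap v a, neg_mul, mul_assoc, iota_swap v b, mul_neg, neg_neg,
    ← mul_assoc]

lemma iota_pair_pair_comm (a b c d : (Bool × Fin N) → ℚ) :
    (ι ℚ a * ι ℚ b) * (ι ℚ c * ι ℚ d) = (ι ℚ c * ι ℚ d) * (ι ℚ a * ι ℚ b) := by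
  calc ι ℚ a * ι ℚ b * (ι ℚ c * ι ℚ d) = ι ℚ a * (ι ℚ b * (ι ℚ c * ι ℚ d)) := by
        rw [mul_assoc]
    _ = ι ℚ a * (ι ℚ c * ι ℚ d) * ι ℚ b := by rw [iota_pair_comm b c d]; noncomm_ring
    _ = ι ℚ c * ι ℚ d * (ι ℚ a * ι ℚ b) := by rw [iota_pair_comm a c d]; noncomm_ring

def gpart : SPart → Fin N → OddAlg N
  | .plain _, _ => 1
  | .bar _, i => φGen N i
  | .und _, i => θGen N i
  | .bil _, i => φGen N i * θGen N i

lemma factor_eq (p : SPart) (i : Fin N) :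
    factor N p i = cst N (gpart p i) * MvPowerSeries.X i ^ p.value := by
  cases p <;> simp [factor, gpart, SPart.value, map_one]

lemma gcomm (p q : SPart) (i j : Fin N) :
    gpart p i * gpart q j = commSgn p q • (gpart q j * gpart p i) := by
  cases p <;> cases q <;>
    simp only [gpart, commSgn, SPart.odd, φGen, θGen] <;> norm_num <;>
    first
      | rfl
      | exact iota_swap _ _
      | exact iota_pair_comm _ _ _
      | exact (iota_pair_comm _ _ _).symm
      | exact iota_pair_pair_comm _ _ _ _

lemma gmerge (p q : SPart) (i : Fin N) :
    gpart p i * gpart q i = mcoef p q • gpart (merge p q) i := by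
  cases p <;> cases q <;>
    simp only [gpart, merge, mcoef, one_mul, mul_one, one_smul, neg_smul, zero_smul,
      φGen, θGen] <;>
    first
      | rfl
      | exact ι_sq_zero _
      | exact iota_swap _ _
      | (rw [← mul_assoc, ι_sq_zero, zero_mul])
      | (rw [mul_assoc, ι_sq_zero, mul_zero])
      | (rw [iota_pair_comm, mul_assoc, ι_sq_zero, mul_zero])
      | (rw [← iota_pair_comm, ← mul_assoc, ι_sq_zero, zero_mul])
      | (rw [← mul_assoc, ← iota_pair_comm, ← mul_assoc, ι_sq_zero, zero_mul, zero_mul])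

lemma cstX_mul (α β : OddAlg N) (i j : Fin N) (a b : ℕ) :
    (cst N α * MvPowerSeries.X i ^ a) * (cst N β * MvPowerSeries.X j ^ b)
      = cst N (α * β) * (MvPowerSeries.X i ^ a * MvPowerSeries.X j ^ b) := by
  have h : MvPowerSeries.X (σ := Fin N) i ^ a * cst N β = cst N β * MvPowerSeries.X i ^ a :=
    ((MvPowerSeries.commute_X (cst N β) i).pow_right a).eq.symm
  calc (cst N α * MvPowerSeries.X i ^ a) * (cst N β * MvPowerSeries.X j ^ b)
      = cst N α * ((MvPowerSeries.X i ^ a * cst N β) * MvPowerSeries.X j ^ b) := by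
        rw [mul_assoc, mul_assoc]
    _ = cst N α * (cst N β * (MvPowerSeries.X i ^ a * MvPowerSeries.X j ^ b)) := by
        rw [h, mul_assoc]
    _ = cst N (α * β) * (MvPowerSeries.X i ^ a * MvPowerSeries.X j ^ b) := by
        rw [← mul_assoc, map_mul]

lemma X_pow_comm (i j : Fin N) (a b : ℕ) :
    MvPowerSeries.X (R := OddAlg N) i ^ a * MvPowerSeries.X j ^ b
      = MvPowerSeries.X j ^ b * MvPowerSeries.X i ^ a :=
  (((MvPowerSeries.commute_X (MvPowerSeries.X (R := OddAlg N) j) i).symm).pow_pow a b).eq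

lemma factor_comm (p q : SPart) (i j : Fin N) :
    factor N p i * factor N q j = commSgn p q • (factor N q j * factor N p i) := by
  rw [factor_eq p i, factor_eq q j, cstX_mul, cstX_mul, gcomm, map_zsmul, smul_mul_assoc,
    X_pow_comm]

lemma merge_value {p q : SPart} (h : mcoef p q ≠ 0) :
    (merge p q).value = p.value + q.value := by
  cases p <;> cases q <;> simp_all [mcoef, merge, SPart.value]

lemma merge_weight {p q : SPart} (h : mcoef p q ≠ 0) :
    (merge p q).weight = p.weight + q.weight := by
  cases p <;> cases q <;> simp_all [mcoef, merge, SPart.weight] <;> push_cast <;> ring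

lemma merge_ne_plain0 {p q : SPart} (h : mcoef p q ≠ 0) (hp : p ≠ .plain 0)
    (hq : q ≠ .plain 0) : merge p q ≠ .plain 0 := by
  cases p <;> cases q <;> simp_all [mcoef, merge] <;> omega

lemma factor_merge (p q : SPart) (i : Fin N) :
    factor N p i * factor N q i = mcoef p q • factor N (merge p q) i := by
  rw [factor_eq p i, factor_eq q i, cstX_mul, ← pow_add, gmerge, map_zsmul, smul_mul_assoc]
  rcases eq_or_ne (mcoef p q) 0 with h | h
  · rw [h, zero_smul, zero_smul]
  · rw [factor_eq (merge p q) i, merge_value h]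

def Sr (N : ℕ) : List SPart → Finset (Fin N) → SRing N
  | [], _ => 1
  | p :: M, u => ∑ i ∈ uᶜ, factor N p i * Sr N M (insert i u)

lemma Sr_nil (u : Finset (Fin N)) : Sr N [] u = 1 := rfl

lemma Sr_cons (p : SPart) (M : List SPart) (u : Finset (Fin N)) :
    Sr N (p :: M) u = ∑ i ∈ uᶜ, factor N p i * Sr N M (insert i u) := rfl

lemma Sr_cons_cons (p q : SPart) (B : List SPart) (u : Finset (Fin N)) :
    Sr N (p :: q :: B) u
      = ∑ i ∈ uᶜ, ∑ j ∈ uᶜ.erase i,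
          factor N p i * (factor N q j * Sr N B (insert j (insert i u))) := by
  rw [Sr_cons]
  refine Finset.sum_congr rfl fun i hi => ?_
  rw [Sr_cons, Finset.mul_sum, Finset.compl_insert]

lemma Sr_swap (p q : SPart) (B : List SPart) (u : Finset (Fin N)) :
    Sr N (p :: q :: B) u = commSgn p q • Sr N (q :: p :: B) u := by
  rw [Sr_cons_cons, Sr_cons_cons, Finset.smul_sum]
  rw [Finset.sum_comm' (s' := fun j => uᶜ.erase j) (t' := uᶜ)
    (by intro i j; simp only [Finset.mem_erase]; constructor
        · rintro ⟨h1, hne, h2⟩; exact ⟨⟨hne.symm, h1⟩, h2⟩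
        · rintro ⟨⟨hne, h1⟩, h2⟩; exact ⟨h1, hne.symm, h2⟩)]
  refine Finset.sum_congr rfl fun j hj => ?_
  rw [Finset.smul_sum]
  refine Finset.sum_congr rfl fun i hi => ?_
  rw [← mul_assoc, factor_comm p q, smul_mul_assoc, mul_assoc, Finset.insert_comm]

lemma Sr_swap_mid (p q : SPart) (A B : List SPart) (u : Finset (Fin N)) :
    Sr N (A ++ p :: q :: B) u = commSgn p q • Sr N (A ++ q :: p :: B) u := by
  induction A generalizing u with
  | nil => exact Sr_swap p q B u
  | cons a A ih =>
    rw [List.cons_append, List.cons_append, Sr_cons, Sr_cons, Finset.smul_sum]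
    refine Finset.sum_congr rfl fun i hi => ?_
    rw [ih, mul_smul_comm]

lemma Sr_dup_zero {p : SPart} (hp : SPart.odd p = true) (A B : List SPart)
    (u : Finset (Fin N)) : Sr N (A ++ p :: p :: B) u = 0 := by
  have h := Sr_swap_mid p p A B u
  have hsgn : commSgn p p = -1 := by unfold commSgn; rw [hp]; rfl
  rw [hsgn, neg_smul, one_smul] at h
  have h2 : (2 : ℚ) • Sr N (A ++ p :: p :: B) u = 0 := by
    rw [two_smul]
    nth_rewrite 1 [h]
    exact neg_add_cancel _
  have := congrArg (fun x => (2 : ℚ)⁻¹ • x) h2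
  simpa [smul_smul] using this

lemma commSgn_pm (p q : SPart) : commSgn p q = 1 ∨ commSgn p q = -1 := by
  unfold commSgn; split <;> simp

lemma pm_mul {z w : ℤ} (hz : z = 1 ∨ z = -1) (hw : w = 1 ∨ w = -1) :
    z * w = 1 ∨ z * w = -1 := by rcases hz with rfl | rfl <;> rcases hw with rfl | rfl <;> simp

lemma Sr_orderedInsert (a : SPart) (X : List SPart) :
    ∃ z : ℤ, (z = 1 ∨ z = -1) ∧ ∀ u : Finset (Fin N),
      Sr N (a :: X) u = z • Sr N (X.orderedInsert rOrd a) u := by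
  induction X with
  | nil => exact ⟨1, Or.inl rfl, fun u => by simp [List.orderedInsert]⟩
  | cons b X ih =>
    by_cases h : rOrd a b
    · exact ⟨1, Or.inl rfl, fun u => by simp [List.orderedInsert, h]⟩
    · obtain ⟨z, hz, hS⟩ := ih
      refine ⟨commSgn a b * z, pm_mul (commSgn_pm a b) hz, fun u => ?_⟩
      rw [List.orderedInsert, if_neg h]
      calc Sr N (a :: b :: X) u = commSgn a b • Sr N (b :: a :: X) u := Sr_swap a b X u
        _ = commSgn a b • ∑ i ∈ uᶜ, factor N b i
              * (z • Sr N (X.orderedInsert rOrd a) (insert i u)) := by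
            rw [Sr_cons]
            congr 1
            exact Finset.sum_congr rfl fun i _ => by rw [hS]
        _ = (commSgn a b * z) • Sr N (b :: X.orderedInsert rOrd a) u := by
            rw [Sr_cons, Finset.smul_sum, Finset.smul_sum]
            exact Finset.sum_congr rfl fun i _ => by
              rw [mul_smul_comm, smul_smul]

lemma Sr_sort (X : List SPart) :
    ∃ z : ℤ, (z = 1 ∨ z = -1) ∧ ∀ u : Finset (Fin N),
      Sr N X u = z • Sr N (X.insertionSort rOrd) u := by
  induction X with
  | nil => exact ⟨1, Or.inl rfl, fun u => by simp [List.insertionSort]⟩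
  | cons x X ih =>
    obtain ⟨z, hz, hS⟩ := ih
    obtain ⟨w, hw, hW⟩ := Sr_orderedInsert x (X.insertionSort rOrd)
    refine ⟨z * w, pm_mul hz hw, fun u => ?_⟩
    have h1 : Sr N (x :: X) u = z • Sr N (x :: X.insertionSort rOrd) u := by
      rw [Sr_cons, Sr_cons, Finset.smul_sum]
      exact Finset.sum_congr rfl fun i _ => by rw [hS, mul_smul_comm]
    rw [h1, hW, smul_smul, List.insertionSort_cons]

lemma sorted_dup_adjacent {X : List SPart} (hs : X.Pairwise rOrd) {x : SPart}
    (h : 2 ≤ X.count x) : ∃ A B, X = A ++ x :: x :: B := by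
  induction X with
  | nil => simp at h
  | cons y Y ih =>
    obtain ⟨hy, hY⟩ := List.pairwise_cons.mp hs
    rcases eq_or_ne y x with rfl | hne
    · have hx : y ∈ Y := by
        have h2 := List.count_cons_self (a := y) (l := Y)
        have hc : 1 ≤ Y.count y := by omega
        exact List.count_pos_iff.mp hc
      cases Y with
      | nil => simp at hx
      | cons w Y' =>
        have hw : w = y := by
          rcases eq_or_ne w y with rfl | hwx
          · rfl
          · have hx' : y ∈ Y' := by
              rcases List.mem_cons.mp hx with h1 | h1
              · exact absurd h1.symm hwx
              · exact h1
            have h1 : rOrd y w := hy w (by simp)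
            have h2 : rOrd w y := (List.pairwise_cons.mp hY).1 y hx'
            exact rOrd_eq h2 h1
        exact ⟨[], Y', by rw [hw]; rfl⟩
    · have h2 : 2 ≤ Y.count x := by
        rw [List.count_cons] at h
        simpa [hne] using h
      obtain ⟨A, B, hAB⟩ := ih hY h2
      exact ⟨y :: A, B, by rw [hAB]; rfl⟩

lemma isSPar_iff (X : List SPart) : IsSPar X ↔ X.Pairwise rOrd ∧
    (∀ a, X.count (SPart.bar a) ≤ 1) ∧ (∀ a, X.count (SPart.und a) ≤ 1) ∧
    SPart.plain 0 ∉ X := Iff.rfl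

lemma Sr_not_spar_zero {X : List SPart} (hs : X.Pairwise rOrd) (h0 : SPart.plain 0 ∉ X)
    (h : ¬ IsSPar X) (u : Finset (Fin N)) : Sr N X u = 0 := by
  have hnb : ¬((∀ a, X.count (SPart.bar a) ≤ 1) ∧ (∀ a, X.count (SPart.und a) ≤ 1)) :=
    fun ⟨hb, hu⟩ => h ⟨hs, hb, hu, h0⟩
  have hdup : ∃ p : SPart, SPart.odd p = true ∧ 2 ≤ X.count p := by
    rcases not_and_or.mp hnb with hb | hu
    · obtain ⟨a, ha⟩ := not_forall.mp hb
      exact ⟨SPart.bar a, rfl, by omega⟩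
    · obtain ⟨a, ha⟩ := not_forall.mp hu
      exact ⟨SPart.und a, rfl, by omega⟩
  obtain ⟨p, hodd, hcnt⟩ := hdup
  obtain ⟨A, B, rfl⟩ := sorted_dup_adjacent hs hcnt
  exact Sr_dup_zero hodd A B u

lemma Sr_reduce {X : List SPart} (h0 : SPart.plain 0 ∉ X) :
    ∃ z : ℤ, (z ≠ 0 → IsSPar (X.insertionSort rOrd)) ∧
      ∀ u : Finset (Fin N), Sr N X u = z • Sr N (X.insertionSort rOrd) u := by
  obtain ⟨z, _, hS⟩ := Sr_sort (N := N) X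
  by_cases hsp : IsSPar (X.insertionSort rOrd)
  · exact ⟨z, fun _ => hsp, hS⟩
  · refine ⟨0, by simp, fun u => ?_⟩
    have hzero : Sr N (X.insertionSort rOrd) u = 0 :=
      Sr_not_spar_zero (List.pairwise_insertionSort _ _)
        (fun hmem => h0 ((List.perm_insertionSort rOrd X).subset hmem)) hsp u
    rw [hS u, hzero, smul_zero, zero_smul]

def pGenU (p : SPart) (u : Finset (Fin N)) : SRing N := ∑ i ∈ uᶜ, factor N p i

def moveCoef (p : SPart) (M : List SPart) (k : ℕ) : ℤ :=
  ((M.take k).map (fun q => commSgn p q)).prod * mcoef p (M.getD k (SPart.plain 0))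

def mergeAtD (p : SPart) (M : List SPart) (k : ℕ) : List SPart :=
  M.set k (merge p (M.getD k (SPart.plain 0)))

lemma moveCoef_zero (p q : SPart) (M : List SPart) :
    moveCoef p (q :: M) 0 = mcoef p q := by simp [moveCoef]

lemma moveCoef_succ (p q : SPart) (M : List SPart) (k : ℕ) :
    moveCoef p (q :: M) (k + 1) = commSgn p q * moveCoef p M k := by
  simp [moveCoef, mul_assoc]

lemma mergeAtD_zero (p q : SPart) (M : List SPart) :
    mergeAtD p (q :: M) 0 = merge p q :: M := by simp [mergeAtD]

lemma mergeAtD_succ (p q : SPart) (M : List SPart) (k : ℕ) :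
    mergeAtD p (q :: M) (k + 1) = q :: mergeAtD p M k := by simp [mergeAtD]

lemma Sr_mul (p : SPart) (M : List SPart) : ∀ u : Finset (Fin N),
    pGenU p u * Sr N M u
      = Sr N (p :: M) u
        + ∑ k ∈ Finset.range M.length, moveCoef p M k • Sr N (mergeAtD p M k) u := by
  induction M with
  | nil =>
    intro u
    simp [pGenU, Sr_cons, Sr_nil, mul_one]
  | cons q M ih =>
    intro u
    have step1 : pGenU p u * Sr N (q :: M) u
        = (∑ j ∈ uᶜ, factor N p j * (factor N q j * Sr N M (insert j u)))
          + ∑ j ∈ uᶜ, ∑ i ∈ uᶜ.erase j,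
              factor N p i * (factor N q j * Sr N M (insert j u)) := by
      rw [← Finset.sum_add_distrib, Sr_cons, Finset.mul_sum]
      refine Finset.sum_congr rfl fun j hj => ?_
      rw [pGenU, Finset.sum_mul]
      exact (Finset.add_sum_erase _ _ hj).symm
    have diag : (∑ j ∈ uᶜ, factor N p j * (factor N q j * Sr N M (insert j u)))
        = mcoef p q • Sr N (merge p q :: M) u := by
      rw [Sr_cons, Finset.smul_sum]
      refine Finset.sum_congr rfl fun j _ => ?_
      rw [← mul_assoc, factor_merge, smul_mul_assoc]
    have inner : ∀ j ∈ uᶜ, (∑ i ∈ uᶜ.erase j,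
          factor N p i * (factor N q j * Sr N M (insert j u)))
        = commSgn p q •
            (factor N q j * Sr N (p :: M) (insert j u)
              + factor N q j * ∑ k ∈ Finset.range M.length,
                  moveCoef p M k • Sr N (mergeAtD p M k) (insert j u)) := by
      intro j _
      rw [← mul_add, ← ih (insert j u)]
      have h1 : (∑ i ∈ uᶜ.erase j, factor N p i * (factor N q j * Sr N M (insert j u)))
          = ∑ i ∈ uᶜ.erase j,
              commSgn p q • (factor N q j * (factor N p i * Sr N M (insert j u))) := by
        refine Finset.sum_congr rfl fun i _ => ?_
        rw [← mul_assoc, factor_comm p q i j, smul_mul_assoc, mul_assoc]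
      rw [h1, ← Finset.smul_sum, ← Finset.mul_sum]
      congr 2
      rw [pGenU, Finset.compl_insert, Finset.sum_mul]
    have hC : (∑ j ∈ uᶜ, factor N q j * ∑ k ∈ Finset.range M.length,
          moveCoef p M k • Sr N (mergeAtD p M k) (insert j u))
        = ∑ k ∈ Finset.range M.length,
            moveCoef p M k • Sr N (q :: mergeAtD p M k) u := by
      calc (∑ j ∈ uᶜ, factor N q j * ∑ k ∈ Finset.range M.length,
              moveCoef p M k • Sr N (mergeAtD p M k) (insert j u))
          = ∑ j ∈ uᶜ, ∑ k ∈ Finset.range M.length,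
              moveCoef p M k • (factor N q j * Sr N (mergeAtD p M k) (insert j u)) := by
            refine Finset.sum_congr rfl fun j _ => ?_
            rw [Finset.mul_sum]
            exact Finset.sum_congr rfl fun k _ => (mul_smul_comm _ _ _)
        _ = ∑ k ∈ Finset.range M.length, ∑ j ∈ uᶜ,
              moveCoef p M k • (factor N q j * Sr N (mergeAtD p M k) (insert j u)) :=
            Finset.sum_comm
        _ = ∑ k ∈ Finset.range M.length,
              moveCoef p M k • Sr N (q :: mergeAtD p M k) u := by
            refine Finset.sum_congr rfl fun k _ => ?_
            rw [← Finset.smul_sum, Sr_cons]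
    have offdiag : (∑ j ∈ uᶜ, ∑ i ∈ uᶜ.erase j,
          factor N p i * (factor N q j * Sr N M (insert j u)))
        = Sr N (p :: q :: M) u
          + ∑ k ∈ Finset.range M.length,
              (commSgn p q * moveCoef p M k) • Sr N (q :: mergeAtD p M k) u := by
      calc (∑ j ∈ uᶜ, ∑ i ∈ uᶜ.erase j, factor N p i * (factor N q j * Sr N M (insert j u)))
          = commSgn p q • ∑ j ∈ uᶜ,
              (factor N q j * Sr N (p :: M) (insert j u)
                + factor N q j * ∑ k ∈ Finset.range M.length,
                    moveCoef p M k • Sr N (mergeAtD p M k) (insert j u)) := by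
            rw [Finset.smul_sum]
            exact Finset.sum_congr rfl fun j hj => inner j hj
        _ = commSgn p q • (Sr N (q :: p :: M) u
              + ∑ k ∈ Finset.range M.length,
                  moveCoef p M k • Sr N (q :: mergeAtD p M k) u) := by
            rw [Finset.sum_add_distrib, ← Sr_cons, hC]
        _ = Sr N (p :: q :: M) u
              + ∑ k ∈ Finset.range M.length,
                  (commSgn p q * moveCoef p M k) • Sr N (q :: mergeAtD p M k) u := by
            rw [smul_add, ← Sr_swap p q M u, Finset.smul_sum]
            congr 1
            refine Finset.sum_congr rfl fun k _ => ?_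
            rw [smul_smul]
    rw [step1, diag, offdiag]
    have hlen : (q :: M).length = M.length + 1 := rfl
    rw [hlen, Finset.sum_range_succ']
    simp only [moveCoef_zero, moveCoef_succ, mergeAtD_zero, mergeAtD_succ]
    abel

lemma weight_nonneg (p : SPart) : 0 ≤ p.weight := by
  cases p <;> simp [SPart.weight] <;> positivity

lemma weight_pos {p : SPart} (h : p ≠ .plain 0) : 0 < p.weight := by
  cases p with
  | plain a =>
    have : a ≠ 0 := fun h0 => h (by rw [h0])
    have : 0 < a := Nat.pos_of_ne_zero this
    simpa [SPart.weight] using by exact_mod_cast this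
  | bar a => simp [SPart.weight]; positivity
  | und a => simp [SPart.weight]; positivity
  | bil a => simp [SPart.weight]; positivity

lemma rOrd_weight {p q : SPart} (h : rOrd p q) : q.weight ≤ p.weight := by
  rcases h with h | ⟨h1, h2⟩
  · have hq : q.weight ≤ q.value + 1 := by
      cases q <;> simp [SPart.weight, SPart.value] <;> norm_num
    have hp : (p.value : ℚ) ≤ p.weight := by
      cases p <;> simp [SPart.weight, SPart.value] <;> norm_num
    have hv : (q.value : ℚ) + 1 ≤ p.value := by exact_mod_cast h
    linarith
  · cases p <;> cases q <;>
      simp_all [SPart.rank, SPart.value, SPart.weight] <;> linarith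

lemma wPartial_nil (n : ℕ) : wPartial [] n = 0 := by simp [wPartial]

lemma wPartial_zero (L : List SPart) : wPartial L 0 = 0 := by simp [wPartial]

lemma wPartial_cons (x : SPart) (L : List SPart) (n : ℕ) :
    wPartial (x :: L) (n + 1) = x.weight + wPartial L n := by
  simp [wPartial]

lemma wPartial_nonneg (L : List SPart) (n : ℕ) : 0 ≤ wPartial L n := by
  induction L generalizing n with
  | nil => simp [wPartial_nil]
  | cons x L ih =>
    match n with
    | 0 => simp [wPartial_zero]
    | n + 1 =>
      rw [wPartial_cons]
      have := weight_nonneg x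
      have := ih n
      linarith

lemma wPartial_le_succ (L : List SPart) (n : ℕ) : wPartial L n ≤ wPartial L (n + 1) := by
  induction L generalizing n with
  | nil => simp [wPartial_nil]
  | cons x L ih =>
    match n with
    | 0 =>
      rw [wPartial_zero, wPartial_cons]
      have := weight_nonneg x
      have := wPartial_nonneg L 0
      linarith
    | n + 1 =>
      rw [wPartial_cons, wPartial_cons]
      have := ih n
      linarith

lemma wPartial_orderedInsert (a : SPart) (X : List SPart) (n : ℕ) :
    wPartial (a :: X) n ≤ wPartial (X.orderedInsert rOrd a) n := by
  induction X generalizing n with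
  | nil => simp [List.orderedInsert]
  | cons b X ih =>
    by_cases h : rOrd a b
    · simp [List.orderedInsert, h]
    · rw [List.orderedInsert, if_neg h]
      have hw : a.weight ≤ b.weight := rOrd_weight ((total_of rOrd a b).resolve_left h)
      match n with
      | 0 => simp [wPartial_zero]
      | 1 =>
        rw [wPartial_cons, wPartial_cons, wPartial_zero, wPartial_zero]
        have := wPartial_nonneg (X.orderedInsert rOrd a) 0
        linarith
      | n + 2 =>
        rw [wPartial_cons, wPartial_cons, wPartial_cons]
        have h1 := ih (n + 1)
        rw [wPartial_cons] at h1
        linarith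

lemma wPartial_sort (X : List SPart) (n : ℕ) :
    wPartial X n ≤ wPartial (X.insertionSort rOrd) n := by
  induction X generalizing n with
  | nil => simp [List.insertionSort]
  | cons x X ih =>
    rw [List.insertionSort_cons]
    refine le_trans ?_ (wPartial_orderedInsert x _ n)
    match n with
    | 0 => simp [wPartial_zero]
    | n + 1 =>
      rw [wPartial_cons, wPartial_cons]
      have := ih n
      linarith

lemma wPartial_erase (X : List SPart) (k : ℕ) (hk : k < X.length) (n : ℕ) :
    wPartial X n ≤ (X.getD k (.plain 0)).weight + wPartial (X.eraseIdx k) n := by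
  induction X generalizing k n with
  | nil => simp at hk
  | cons x X ih =>
    match k with
    | 0 =>
      match n with
      | 0 =>
        rw [wPartial_zero]
        have := weight_nonneg x
        have := wPartial_nonneg (List.eraseIdx (x :: X) 0) 0
        simp only [List.getD_cons_zero]
        linarith
      | n + 1 =>
        simp only [List.getD_cons_zero, List.eraseIdx]
        rw [wPartial_cons]
        have := wPartial_le_succ X n
        linarith
    | k + 1 =>
      have hk' : k < X.length := by simpa using hk
      match n with
      | 0 =>
        rw [wPartial_zero]
        have := weight_nonneg ((x :: X).getD (k+1) (.plain 0))
        have := wPartial_nonneg (List.eraseIdx (x :: X) (k+1)) 0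
        linarith
      | n + 1 =>
        simp only [List.getD_cons_succ, List.eraseIdx]
        rw [wPartial_cons, wPartial_cons]
        have := ih k hk' n
        linarith

lemma sort_eq_of_perm {A B : List SPart} (h : A.Perm B) :
    A.insertionSort rOrd = B.insertionSort rOrd :=
  List.Perm.eq_of_pairwise (fun _ _ _ _ h1 h2 => rOrd_eq h1 h2)
    (List.pairwise_insertionSort rOrd A) (List.pairwise_insertionSort rOrd B)
    ((List.perm_insertionSort rOrd A).trans (h.trans (List.perm_insertionSort rOrd B).symm))

lemma mergeAtD_perm (p : SPart) (X : List SPart) (k : ℕ) (hk : k < X.length) :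
    (mergeAtD p X k).Perm (merge p (X.getD k (.plain 0)) :: X.eraseIdx k) := by
  rw [mergeAtD, List.set_eq_take_cons_drop _ hk, List.eraseIdx_eq_take_drop_succ]
  exact List.perm_middle

def Rep (L : List SPart) (x : SRing N) : Prop :=
  ∃ c : List SPart →₀ ℤ, (∀ Γ ∈ c.support, IsSPar Γ ∧ wLt L Γ) ∧
    x = c.sum fun Γ z => z • Sr N Γ ∅

lemma Rep_zero (L : List SPart) : Rep (N := N) L 0 :=
  ⟨0, by simp, by simp⟩

lemma Rep_add {L : List SPart} {x y : SRing N} (hx : Rep L x) (hy : Rep L y) :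
    Rep (N := N) L (x + y) := by
  obtain ⟨c1, h1, rfl⟩ := hx; obtain ⟨c2, h2, rfl⟩ := hy
  refine ⟨c1 + c2, fun Γ hΓ => ?_, ?_⟩
  · rcases Finset.mem_union.mp (Finsupp.support_add hΓ) with h | h
    exacts [h1 Γ h, h2 Γ h]
  · exact (Finsupp.sum_add_index' (fun Γ => zero_smul ℤ (Sr N Γ ∅))
      (fun Γ z w => add_smul z w (Sr N Γ ∅))).symm

lemma Rep_smul {L : List SPart} {x : SRing N} (z : ℤ) (hx : Rep L x) :
    Rep (N := N) L (z • x) := by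
  obtain ⟨c, h, rfl⟩ := hx
  refine ⟨z • c, fun Γ hΓ => h Γ (Finsupp.support_smul hΓ), ?_⟩
  have h1 : (z • c).sum (fun Γ w => w • Sr N Γ ∅)
      = c.sum fun Γ w => (z * w) • Sr N Γ ∅ :=
    Finsupp.sum_smul_index' (fun Γ => zero_smul ℤ _)
  rw [h1, Finsupp.smul_sum]
  exact Finsupp.sum_congr fun Γ _ => (mul_smul z _ _).symm

lemma Rep_single {L : List SPart} (Γ : List SPart) (z : ℤ)
    (h : z ≠ 0 → IsSPar Γ ∧ wLt L Γ) : Rep (N := N) L (z • Sr N Γ ∅) := by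
  refine ⟨Finsupp.single Γ z, fun Γ' hΓ' => ?_, ?_⟩
  · have hz : z ≠ 0 := by rintro rfl; simp at hΓ'
    have hΓ : Γ' = Γ := by
      have := Finsupp.support_single_subset hΓ'
      simpa using this
    subst hΓ; exact h hz
  · exact (Finsupp.sum_single_index (h := fun Γ' w => w • Sr N Γ' ∅) (zero_smul ℤ (Sr N Γ ∅))).symm

lemma Rep_sum {L : List SPart} {ι : Type} (s : Finset ι) (g : ι → SRing N)
    (h : ∀ a ∈ s, Rep L (g a)) : Rep (N := N) L (∑ a ∈ s, g a) := by
  induction s using Finset.cons_induction with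
  | empty => simpa using Rep_zero (N := N) L
  | cons a s ha ih =>
    rw [Finset.sum_cons]
    exact Rep_add (h a (Finset.mem_cons_self a s))
      (ih fun b hb => h b (Finset.mem_cons_of_mem hb))

lemma count_le_cons (x p : SPart) (M : List SPart) : M.count x ≤ (p :: M).count x := by
  rw [List.count_cons]
  exact Nat.le_add_right _ _

lemma isSPar_tail {p : SPart} {M : List SPart} (h : IsSPar (p :: M)) : IsSPar M := by
  obtain ⟨hs, hb, hu, h0⟩ := h
  exact ⟨(List.pairwise_cons.mp hs).2, fun a => le_trans (count_le_cons _ p M) (hb a),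
    fun a => le_trans (count_le_cons _ p M) (hu a),
    fun hm => h0 (List.mem_cons_of_mem p hm)⟩

lemma pProd_cons (p : SPart) (M : List SPart) :
    pProd N (p :: M) = pGen N p * pProd N M := by simp [pProd]

lemma pGen_eq (p : SPart) : pGen N p = pGenU p (∅ : Finset (Fin N)) := by
  rw [pGen, pGenU, Finset.compl_empty]

lemma getD_mem {X : List SPart} {k : ℕ} (hk : k < X.length) : X.getD k (.plain 0) ∈ X := by
  rw [List.getD_eq_getElem _ _ hk]
  exact List.getElem_mem hk

lemma Rep_mergeTerm {L : List SPart} (p : SPart) (X : List SPart) (k : ℕ)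
    (hk : k < X.length) (hp0 : p ≠ .plain 0) (hX0 : SPart.plain 0 ∉ X)
    (hdom : ∀ n, wPartial L n ≤ wPartial (p :: X) n) :
    Rep (N := N) L (moveCoef p X k • Sr N (mergeAtD p X k) ∅) := by
  rcases eq_or_ne (moveCoef p X k) 0 with h0 | h0
  · rw [h0, zero_smul]; exact Rep_zero L
  · have hmc : mcoef p (X.getD k (.plain 0)) ≠ 0 :=
      fun h => h0 (by rw [moveCoef, h, mul_zero])
    have hqX : X.getD k (.plain 0) ∈ X := getD_mem hk
    have hq0 : X.getD k (.plain 0) ≠ .plain 0 := fun h => hX0 (h ▸ hqX)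
    have hm0 : merge p (X.getD k (.plain 0)) ≠ .plain 0 := merge_ne_plain0 hmc hp0 hq0
    have hperm := mergeAtD_perm p X k hk
    have hmem0 : SPart.plain 0 ∉ mergeAtD p X k := by
      intro hmem
      rcases List.mem_cons.mp (hperm.subset hmem) with h | h
      · exact hm0 h.symm
      · exact hX0 ((List.eraseIdx_sublist X k).subset h)
    obtain ⟨z, hz, hS⟩ := Sr_reduce (N := N) hmem0
    rw [hS ∅, smul_smul]
    have e1 : (mergeAtD p X k).insertionSort rOrd
        = (merge p (X.getD k (.plain 0)) :: X.eraseIdx k).insertionSort rOrd :=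
      sort_eq_of_perm hperm
    have hdom2 : ∀ n, wPartial (p :: X) n
        ≤ wPartial (merge p (X.getD k (.plain 0)) :: X.eraseIdx k) n := by
      intro n
      match n with
      | 0 => simp [wPartial_zero]
      | n + 1 =>
        rw [wPartial_cons, wPartial_cons, merge_weight hmc]
        have := wPartial_erase X k hk n
        linarith
    refine Rep_single _ _ (fun hnz => ?_)
    have hzne : z ≠ 0 := fun h => hnz (by rw [h, mul_zero])
    refine ⟨hz hzne, fun n => ?_, ⟨1, ?_⟩⟩
    · rw [e1]
      exact le_trans (hdom n) (le_trans (hdom2 n) (wPartial_sort _ n))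
    · rw [e1]
      have h1 : wPartial L 1 ≤ wPartial (p :: X) 1 := hdom 1
      have h2 : wPartial (p :: X) 1
          < wPartial (merge p (X.getD k (.plain 0)) :: X.eraseIdx k) 1 := by
        rw [wPartial_cons, wPartial_cons, wPartial_zero, wPartial_zero, merge_weight hmc]
        have := weight_pos hq0
        linarith
      have h3 := wPartial_sort (merge p (X.getD k (.plain 0)) :: X.eraseIdx k) 1
      linarith

lemma Rep_consTerm {L : List SPart} (p : SPart) (X : List SPart)
    (hp0 : p ≠ .plain 0) (hX0 : SPart.plain 0 ∉ X)
    (hdom : ∀ n, wPartial L n ≤ wPartial (p :: X) n)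
    (hstrict : ∃ n, wPartial L n < wPartial (p :: X) n) :
    Rep (N := N) L (Sr N (p :: X) ∅) := by
  have hmem0 : SPart.plain 0 ∉ (p :: X) := by
    intro h
    rcases List.mem_cons.mp h with h | h
    · exact hp0 h.symm
    · exact hX0 h
  obtain ⟨z, hz, hS⟩ := Sr_reduce (N := N) hmem0
  rw [hS ∅]
  refine Rep_single _ _ (fun hnz => ⟨hz hnz, fun n => ?_, ?_⟩)
  · exact le_trans (hdom n) (wPartial_sort _ n)
  · obtain ⟨n, hn⟩ := hstrict
    exact ⟨n, lt_of_lt_of_le hn (wPartial_sort _ n)⟩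

lemma master (L : List SPart) (hL : IsSPar L) :
    ∃ r : SRing N, Rep L r ∧ pProd N L = Sr N L ∅ + r := by
  induction L with
  | nil => exact ⟨0, Rep_zero [], by simp [pProd, Sr_nil]⟩
  | cons p M ih =>
    have hM : IsSPar M := isSPar_tail hL
    obtain ⟨r, ⟨c, hc, rfl⟩, hP⟩ := ih hM
    have hp0 : p ≠ .plain 0 :=
      fun h => hL.2.2.2 (by rw [← h]; exact List.mem_cons_self)
    have hM0 : SPart.plain 0 ∉ M := fun h => hL.2.2.2 (List.mem_cons_of_mem p h)
    refine ⟨(∑ k ∈ Finset.range M.length, moveCoef p M k • Sr N (mergeAtD p M k) ∅)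
      + pGenU p ∅ * (c.sum fun Γ z => z • Sr N Γ ∅), ?_, ?_⟩
    · refine Rep_add (Rep_sum _ _ fun k hk => ?_) ?_
      · exact Rep_mergeTerm p M k (Finset.mem_range.mp hk) hp0 hM0 (fun n => le_refl _)
      · rw [Finsupp.sum, Finset.mul_sum]
        refine Rep_sum _ _ fun Γ hΓ => ?_
        obtain ⟨hsparΓ, hwlt⟩ := hc Γ hΓ
        have hdomΓ : ∀ n, wPartial (p :: M) n ≤ wPartial (p :: Γ) n := by
          intro n
          match n with
          | 0 => simp [wPartial_zero]
          | n + 1 =>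
            rw [wPartial_cons, wPartial_cons]
            have := hwlt.1 n
            linarith
        have hstrΓ : ∃ n, wPartial (p :: M) n < wPartial (p :: Γ) n := by
          obtain ⟨n, hn⟩ := hwlt.2
          exact ⟨n + 1, by rw [wPartial_cons, wPartial_cons]; linarith⟩
        have hΓ0 : SPart.plain 0 ∉ Γ := hsparΓ.2.2.2
        rw [mul_smul_comm]
        refine Rep_smul _ ?_
        rw [Sr_mul p Γ ∅]
        exact Rep_add (Rep_consTerm p Γ hp0 hΓ0 hdomΓ hstrΓ)
          (Rep_sum _ _ fun k hk =>
            Rep_mergeTerm p Γ k (Finset.mem_range.mp hk) hp0 hΓ0 hdomΓ)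
    · rw [pProd_cons, hP, mul_add, pGen_eq, Sr_mul p M ∅, add_assoc]

lemma Sr_eq_emb (L : List SPart) : ∀ u : Finset (Fin N),
    (∑ f : {f : Fin L.length ↪ Fin N // ∀ k, f k ∉ u},
        ((List.finRange L.length).map (fun i => factor N (L.get i) (f.1 i))).prod)
      = Sr N L u := by
  induction L with
  | nil =>
    intro u
    letI : Unique {f : Fin (List.length ([] : List SPart)) ↪ Fin N // ∀ k, f k ∉ u} :=
      { default := ⟨⟨Fin.elim0, fun a => a.elim0⟩, fun k => k.elim0⟩
        uniq := fun f => Subtype.ext (Function.Embedding.ext fun k => k.elim0) }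
    rw [Fintype.sum_unique]
    simp [Sr_nil]
  | cons p M ih =>
    intro u
    have havoid : ∀ (i : {i : Fin N // i ∉ u})
        (g : {g : Fin M.length ↪ Fin N // ∀ k, g k ∉ insert i.1 u}) (k : Fin (M.length + 1)),
        (Fin.cases i.1 g.1 k : Fin N) ∉ u := by
      intro i g k
      induction k using Fin.cases with
      | zero => simpa using i.2
      | succ j =>
        simp only [Fin.cases_succ]
        exact fun hj => g.2 j (Finset.mem_insert_of_mem hj)
    have hinj : ∀ (i : {i : Fin N // i ∉ u})
        (g : {g : Fin M.length ↪ Fin N // ∀ k, g k ∉ insert i.1 u}),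
        Function.Injective (Fin.cases i.1 g.1 : Fin (M.length + 1) → Fin N) := by
      intro i g k l h
      induction k using Fin.cases with
      | zero =>
        induction l using Fin.cases with
        | zero => rfl
        | succ l =>
          simp only [Fin.cases_zero, Fin.cases_succ] at h
          exact absurd (by rw [← h]; exact Finset.mem_insert_self i.1 u) (g.2 l)
      | succ k =>
        induction l using Fin.cases with
        | zero =>
          simp only [Fin.cases_zero, Fin.cases_succ] at h
          exact absurd (by rw [h]; exact Finset.mem_insert_self i.1 u) (g.2 k)
        | succ l =>
          simp only [Fin.cases_succ] at h
          rw [g.1.injective h]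
    set e : (Σ i : {i : Fin N // i ∉ u},
        {g : Fin M.length ↪ Fin N // ∀ k, g k ∉ insert i.1 u})
        → {f : Fin (M.length + 1) ↪ Fin N // ∀ k, f k ∉ u} :=
      fun x => ⟨⟨Fin.cases x.1.1 x.2.1, hinj x.1 x.2⟩, havoid x.1 x.2⟩ with he
    have hbij : Function.Bijective e := by
      constructor
      · rintro ⟨i, g⟩ ⟨i', g'⟩ h
        have hval : ∀ k, (Fin.cases i.1 g.1 k : Fin N) = Fin.cases i'.1 g'.1 k := fun k =>
          DFunLike.congr_fun (congrArg Subtype.val h) k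
        have h0 : i = i' := Subtype.ext (by simpa using hval 0)
        subst h0
        have h1 : g = g' := Subtype.ext (Function.Embedding.ext fun k => by
          simpa using hval k.succ)
        subst h1
        rfl
      · rintro ⟨f, hf⟩
        refine ⟨⟨⟨f 0, hf 0⟩, ⟨⟨fun k => f k.succ, fun k l h =>
          Fin.succ_injective _ (f.injective h)⟩, fun k => ?_⟩⟩, ?_⟩
        · simp only [Finset.mem_insert]
          push_neg
          exact ⟨fun h => Fin.succ_ne_zero k (f.injective h), hf k.succ⟩
        · apply Subtype.ext
          apply Function.Embedding.ext
          intro k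
          induction k using Fin.cases with
          | zero => simp [he]
          | succ j => simp [he]; rfl
    have hsum := Fintype.sum_bijective e hbij
      (fun x => ((List.finRange (M.length + 1)).map
        (fun k => factor N ((p :: M).get k) ((e x).1 k))).prod)
      (fun f => ((List.finRange (M.length + 1)).map
        (fun k => factor N ((p :: M).get k) (f.1 k))).prod)
      (fun x => rfl)
    show (∑ f : {f : Fin (M.length + 1) ↪ Fin N // ∀ k, f k ∉ u},
        ((List.finRange (M.length + 1)).map
          (fun i => factor N ((p :: M).get i) (f.1 i))).prod) = Sr N (p :: M) u
    rw [← hsum, ← Finset.univ_sigma_univ, Finset.sum_sigma]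
    have hpoint : ∀ (i : {i : Fin N // i ∉ u})
        (g : {g : Fin M.length ↪ Fin N // ∀ k, g k ∉ insert i.1 u}),
        ((List.finRange (M.length + 1)).map
          (fun k => factor N ((p :: M).get k) ((e ⟨i, g⟩).1 k))).prod
        = factor N p i.1 *
            ((List.finRange M.length).map (fun k => factor N (M.get k) (g.1 k))).prod := by
      intro i g
      rw [List.finRange_succ, List.map_cons, List.prod_cons, List.map_map]
      rfl
    calc (∑ i : {i : Fin N // i ∉ u}, ∑ g : {g : Fin M.length ↪ Fin N // ∀ k, g k ∉ insert i.1 u},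
            ((List.finRange (M.length + 1)).map
              (fun k => factor N ((p :: M).get k) ((e ⟨i, g⟩).1 k))).prod)
        = ∑ i : {i : Fin N // i ∉ u}, factor N p i.1 * Sr N M (insert i.1 u) := by
          refine Finset.sum_congr rfl fun i _ => ?_
          rw [← ih (insert i.1 u), Finset.mul_sum]
          exact Finset.sum_congr rfl fun g _ => hpoint i g
      _ = ∑ i ∈ uᶜ, factor N p i * Sr N M (insert i u) := by
          exact (Finset.sum_subtype uᶜ (fun i => Finset.mem_compl)
            (fun i => factor N p i * Sr N M (insert i u))).symm
      _ = Sr N (p :: M) u := (Sr_cons p M u).symm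

lemma aFac_pos (L : List SPart) : 0 < aFac L :=
  Finset.prod_pos fun p _ => Nat.factorial_pos _

lemma aFac_smul_mono (L : List SPart) : (aFac L : ℚ) • mono N L = Sr N L ∅ := by
  rw [mono, smul_smul, mul_inv_cancel₀ (by exact_mod_cast (aFac_pos L).ne'), one_smul]
  rw [← Sr_eq_emb (N := N) L ∅]
  exact (Fintype.sum_equiv (Equiv.subtypeUnivEquiv (fun f => by simp)) _ _ fun x => rfl).symm

end UT
-- ===================== End auxiliary development =====================

/-- Upper triangularity of the power sums in the monomial basis with respect to the weight
ordering: `p_Λ = a_Λ m_Λ + Σ_{Γ > Λ} a_{Λ,Γ} m_Γ` with integer coefficients `a_{Λ,Γ}` and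
`a_Λ = Π n_Λ(Λᵢ)!`. -/
theorem pProd_upper_triangular (N : ℕ) (L : List SPart) (hL : IsSPar L) :
    ∃ c : List SPart →₀ ℤ,
      (∀ Γ ∈ c.support, IsSPar Γ ∧ wLt L Γ) ∧
      pProd N L = (aFac L : ℚ) • mono N L + c.sum (fun Γ z => z • mono N Γ) := by
  classical
  obtain ⟨r, ⟨c₀, hc₀, rfl⟩, hP⟩ := UT.master (N := N) L hL
  refine ⟨c₀.sum fun Γ z => Finsupp.single Γ (z * (aFac Γ : ℤ)), fun Γ hΓ => ?_, ?_⟩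
  · have hsub := Finsupp.support_sum hΓ
    obtain ⟨Γ', hΓ', hmem⟩ := Finset.mem_biUnion.mp hsub
    have hΓΓ' : Γ = Γ' := by
      have := Finsupp.support_single_subset hmem
      simpa using this
    exact hΓΓ' ▸ hc₀ Γ' hΓ'
  · rw [hP, UT.aFac_smul_mono L]
    congr 1
    have h1 : ∀ d : List SPart →₀ ℤ, (d.sum fun Γ z => z • mono N Γ)
        = Finsupp.linearCombination ℤ (fun Γ => mono N Γ) d :=
      fun d => (Finsupp.linearCombination_apply _ _).symm
    rw [h1]
    simp only [Finsupp.sum]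
    rw [map_sum]
    refine Finset.sum_congr rfl fun Γ _ => ?_
    rw [Finsupp.linearCombination_single, mul_smul, ← UT.aFac_smul_mono (N := N) Γ,
      ← Int.cast_smul_eq_zsmul ℚ (aFac Γ : ℤ) (mono N Γ)]
    norm_num

end
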